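/- Let α ∈ (0, 1) and define σ₁₂ : ℝ → ℝ by σ₁₂(γ) = α·(3 + γ²)^{α/2 − 1}·γ. Then σ₁₂(0) = 0, σ₁₂'(0) = α·3^{α/2 − 1} > 0, σ₁₂(γ) → 0 as γ → +∞, and σ₁₂ is not monotone on ℝ: there exist 0 < γ₁ < γ₂ with σ₁₂(γ₁) > σ₁₂(γ₂). -/

import Mathlib

open Filter

noncomputable section

theorem stmt_17 (α : ℝ) (hα0 : 0 < α) (hα1 : α < 1) :
    (fun γ : ℝ => α * (3 + γ ^ 2) ^ (α / 2 - 1) * γ) 0 = 0 ∧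
    deriv (fun γ : ℝ => α * (3 + γ ^ 2) ^ (α / 2 - 1) * γ) 0 = α * (3 : ℝ) ^ (α / 2 - 1) ∧
    0 < α * (3 : ℝ) ^ (α / 2 - 1) ∧
    Tendsto (fun γ : ℝ => α * (3 + γ ^ 2) ^ (α / 2 - 1) * γ) atTop (nhds 0) ∧
    ¬ Monotone (fun γ : ℝ => α * (3 + γ ^ 2) ^ (α / 2 - 1) * γ) ∧
    ∃ γ₁ γ₂ : ℝ, 0 < γ₁ ∧ γ₁ < γ₂ ∧
      α * (3 + γ₂ ^ 2) ^ (α / 2 - 1) * γ₂ < α * (3 + γ₁ ^ 2) ^ (α / 2 - 1) * γ₁ := by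
  set f : ℝ → ℝ := fun γ : ℝ => α * (3 + γ ^ 2) ^ (α / 2 - 1) * γ with hf
  have h0 : f 0 = 0 := by simp [hf]
  -- derivative at 0
  have hderiv : deriv f 0 = α * (3 : ℝ) ^ (α / 2 - 1) := by
    have hbase : HasDerivAt (fun γ : ℝ => 3 + γ ^ 2) (2 * (0:ℝ) ^ 1) 0 := by
      simpa using (hasDerivAt_pow 2 (0:ℝ)).const_add 3
    have hne : (3 + (0:ℝ) ^ 2) ≠ 0 := by norm_num
    have hr := (hbase.rpow_const (p := α / 2 - 1) (Or.inl hne)).const_mul α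
    have hm : HasDerivAt (fun γ : ℝ => α * (3 + γ ^ 2) ^ (α / 2 - 1) * γ) (α * (2 * (0:ℝ) ^ 1 * (α / 2 - 1) * (3 + (0:ℝ) ^ 2) ^ (α / 2 - 1 - 1)) * id 0 + α * (3 + (0:ℝ) ^ 2) ^ (α / 2 - 1) * 1) 0 := hr.mul (hasDerivAt_id (0:ℝ))
    have : HasDerivAt f (α * (3 : ℝ) ^ (α / 2 - 1)) 0 := by
      convert hm using 1
      · norm_num
    exact this.deriv
  -- positivity
  have hpos : 0 < α * (3 : ℝ) ^ (α / 2 - 1) :=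
    mul_pos hα0 (Real.rpow_pos_of_pos (by norm_num) _)
  -- tendsto
  have hexp : α / 2 - 1 ≤ 0 := by linarith
  have htend : Tendsto f atTop (nhds 0) := by
    have hub : ∀ᶠ γ : ℝ in atTop, f γ ≤ α * γ ^ (α - 1) := by
      filter_upwards [eventually_ge_atTop (1:ℝ)] with γ hγ
      have hγ0 : (0:ℝ) < γ := lt_of_lt_of_le one_pos hγ
      have h1 : (3 + γ ^ 2) ^ (α / 2 - 1) ≤ (γ ^ 2) ^ (α / 2 - 1) :=
        Real.rpow_le_rpow_of_nonpos (by positivity) (by linarith) hexp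
      have h2 : (γ ^ 2 : ℝ) ^ (α / 2 - 1) = γ ^ (α - 2) := by
        rw [← Real.rpow_natCast γ 2, ← Real.rpow_mul hγ0.le]
        norm_num
        ring_nf
      calc f γ ≤ α * (γ ^ 2) ^ (α / 2 - 1) * γ := by
            have := mul_le_mul_of_nonneg_left h1 hα0.le
            exact mul_le_mul_of_nonneg_right this hγ0.le
        _ = α * γ ^ (α - 1) := by
            rw [h2, mul_assoc, ← Real.rpow_add_one hγ0.ne']
            ring_nf
    have hlb : ∀ᶠ γ : ℝ in atTop, 0 ≤ f γ := by
      filter_upwards [eventually_ge_atTop (0:ℝ)] with γ hγ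
      have : (0:ℝ) < 3 + γ ^ 2 := by positivity
      exact mul_nonneg (mul_nonneg hα0.le (Real.rpow_pos_of_pos this _).le) hγ
    have hmaj : Tendsto (fun γ : ℝ => α * γ ^ (α - 1)) atTop (nhds 0) := by
      have := (tendsto_rpow_neg_atTop (y := 1 - α) (by linarith)).const_mul α
      simpa [neg_sub] using this
    exact squeeze_zero' hlb hub hmaj
  -- non-monotone
  have hf1 : 0 < f 1 := by
    have : (0:ℝ) < 3 + (1:ℝ) ^ 2 := by norm_num
    exact mul_pos (mul_pos hα0 (Real.rpow_pos_of_pos this _)) one_pos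
  have hev : ∀ᶠ γ : ℝ in atTop, f γ < f 1 :=
    htend.eventually_lt_const hf1
  have hex : ∃ γ₂ : ℝ, 1 < γ₂ ∧ f γ₂ < f 1 := by
    obtain ⟨γ₂, h1, h2⟩ := ((eventually_gt_atTop (1:ℝ)).and hev).exists
    exact ⟨γ₂, h1, h2⟩
  obtain ⟨γ₂, hγ₂1, hγ₂2⟩ := hex
  refine ⟨h0, hderiv, hpos, htend, ?_, 1, γ₂, one_pos, hγ₂1, hγ₂2⟩
  intro hmono
  exact absurd (hmono hγ₂1.le) (not_le.mpr hγ₂2)
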